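/- arXiv:2504.12546 — 9 statements merged into one kernel-verified Lean document; each statement's English description precedes it below -/
import Mathlib

section
/- Pseudo-anonymous announcements cannot simulate public announcements up to bisimulation: there exists a finite epistemic model M (on 3 agents, with states t ∼_{ac} s ∼_{bc} u, where p holds only at s) and a public announcement p! such that no pseudo-anonymous announcement φ⟡ applied to M yields a model bisimilar to M^{p!} (the single p-state model). In particular, no pseudo-anonymous update of M can remove all ¬p-states. -/
/-- An epistemic (Kripke) model over agent set `Agt` and state set `St`. -/
structure Model (Agt : Type) (St : Type) where
  rel : Agt → St → St → Prop
  val : ℕ → St → Prop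

/-- The model is an epistemic model proper: each agent's relation is an equivalence. -/
def isEquivModel {Agt St : Type} (M : Model Agt St) : Prop :=
  ∀ a, Equivalence (M.rel a)

/-- Formulas: atoms, ⊥, →, ∧, K_a, ▲ (safety), [φ⟡]ψ (pseudo-anonymous announcement),
    [φ⟡!]ψ (safe/intentional anonymous announcement). -/
inductive Form (Agt : Type) : Type where
  | atom : ℕ → Form Agt
  | bot  : Form Agt
  | imp  : Form Agt → Form Agt → Form Agt
  | and  : Form Agt → Form Agt → Form Agt
  | K    : Agt → Form Agt → Form Agt
  | tri  : Form Agt → Form Agt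
  | annA : Form Agt → Form Agt → Form Agt
  | annS : Form Agt → Form Agt → Form Agt

def Form.neg {Agt : Type} (φ : Form Agt) : Form Agt := .imp φ .bot

/-- One step of the safety operator: `⋁_{G ∈ N³} E_G (P ∧ X)`. -/
def fsafe {Agt St : Type} (M : Model Agt St) (P X : St → Prop) (s : St) : Prop :=
  ∃ G : Finset Agt, G.card = 3 ∧ ∀ a ∈ G, ∀ t, M.rel a s t → P t ∧ X t

/-- `▲P` semantically: greatest fixpoint of `fsafe M P`, i.e. union of post-fixed points. -/
def triSem {Agt St : Type} (M : Model Agt St) (P : St → Prop) (s : St) : Prop :=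
  ∃ X : St → Prop, X s ∧ ∀ t, X t → fsafe M P X t

/-- Product update of `M` with an action model whose events are `E`, relation `arel`, and
    (semantic) preconditions `pre`.  States not satisfying the precondition are cut off
    from the relation (this encodes the restriction to legal states). -/
def prodUpd {Agt St E : Type} (M : Model Agt St) (arel : Agt → E → E → Prop)
    (pre : E → St → Prop) : Model Agt (St × E) where
  rel c p q := pre p.2 p.1 ∧ pre q.2 q.1 ∧ M.rel c p.1 q.1 ∧ arel c p.2 q.2
  val n p := M.val n p.1

/-- Action relation of the pseudo-anonymous action model: `a ∼_c b` iff `(a = c ↔ b = c)`. -/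
def anonRel {Agt : Type} (c a b : Agt) : Prop := (a = c ↔ b = c)

/-- The pseudo-anonymous style update `M^{φ⟡}` (with precondition `pre a`). -/
def updA {Agt St : Type} (M : Model Agt St) (pre : Agt → St → Prop) : Model Agt (St × Agt) :=
  prodUpd M anonRel pre

/-- Satisfaction. -/
def Sat {Agt : Type} : {St : Type} → Model Agt St → St → Form Agt → Prop
  | _, M, s, .atom n => M.val n s
  | _, _, _, .bot => False
  | _, M, s, .imp φ ψ => Sat M s φ → Sat M s ψ
  | _, M, s, .and φ ψ => Sat M s φ ∧ Sat M s ψ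
  | _, M, s, .K a φ => ∀ t, M.rel a s t → Sat M t φ
  | _, M, s, .tri φ => triSem M (fun t => Sat M t φ) s
  | _, M, s, .annA φ ψ => ∀ a, (∀ t, M.rel a s t → Sat M t φ) →
      Sat (updA M (fun b t => ∀ u, M.rel b t u → Sat M u φ)) (s, a) ψ
  | _, M, s, .annS φ ψ => ∀ a, (∀ t, M.rel a s t → triSem M (fun u => Sat M u φ) t) →
      Sat (updA M (fun b t => ∀ u, M.rel b t u → triSem M (fun v => Sat M v φ) u)) (s, a) ψ

/-- The pseudo-anonymous update `M^{φ⟡}`. -/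
def updAnn {Agt St : Type} (M : Model Agt St) (φ : Form Agt) : Model Agt (St × Agt) :=
  updA M (fun b t => ∀ u, M.rel b t u → Sat M u φ)

/-- The safe (intentional) anonymous update `M^{φ⟡!}`. -/
def updSafe {Agt St : Type} (M : Model Agt St) (φ : Form Agt) : Model Agt (St × Agt) :=
  updA M (fun b t => ∀ u, M.rel b t u → triSem M (fun v => Sat M v φ) u)

/-- Public announcement update: restriction of `M` to `P` (encoded by cutting the relation). -/
def restrict {Agt St : Type} (M : Model Agt St) (P : St → Prop) : Model Agt St where
  rel a x y := P x ∧ P y ∧ M.rel a x y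
  val := M.val

/-- Iterative approximations `▲_n`. -/
def triN {Agt St : Type} (M : Model Agt St) (P : St → Prop) : ℕ → St → Prop
  | 0 => P
  | n + 1 => fun s => P s ∧ ∃ G : Finset Agt, G.card = 3 ∧
      ∀ a ∈ G, ∀ t, M.rel a s t → triN M P n t

/-- Standard bisimulation between two models. -/
structure Bisim {Agt St₁ St₂ : Type} (M₁ : Model Agt St₁) (M₂ : Model Agt St₂)
    (Z : St₁ → St₂ → Prop) : Prop where
  atoms : ∀ s t, Z s t → ∀ n, (M₁.val n s ↔ M₂.val n t)
  forth : ∀ s t, Z s t → ∀ a u, M₁.rel a s u → ∃ v, M₂.rel a t v ∧ Z u v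
  back  : ∀ s t, Z s t → ∀ a v, M₂.rel a t v → ∃ u, M₁.rel a s u ∧ Z u v

/-- `f` is a group assignment function for `M`. -/
def GroupAssign {Agt St : Type} (M : Model Agt St) (f : St → Finset Agt) : Prop :=
  (∀ t, f t = ∅ ∨ (f t).card = 3) ∧
  (∀ t t' i, i ∈ f t → M.rel i t t' → f t' ≠ ∅)

/-- `σ : Fin (m+1) → St` is an `f`-consistent path. -/
def FPath {Agt St : Type} (M : Model Agt St) (f : St → Finset Agt) (m : ℕ)
    (σ : Fin (m + 1) → St) : Prop :=
  ∀ k : Fin m, ∃ a ∈ f (σ k.castSucc), M.rel a (σ k.castSucc) (σ k.succ)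

/-- The model of Figure 3: agents `a = 0, b = 1, c = 2`; states `t = 0, s = 1, u = 2`;
`t ∼_{ac} s ∼_{bc} u`; `p` (atom 0) holds only at `s`. -/
def M1 : Model (Fin 3) (Fin 3) where
  rel a x y :=
    match a with
    | 0 => x = y ∨ (x ≠ 2 ∧ y ≠ 2)
    | 1 => x = y ∨ (x ≠ 0 ∧ y ≠ 0)
    | 2 => True
  val n x := n = 0 ∧ x = 1

/-- The public-announcement update `M1^{p!}`: a single state satisfying exactly `p`. -/
def Mp : Model (Fin 3) Unit where
  rel _ _ _ := True
  val n _ := n = 0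

def wfun : Fin 3 → Fin 3 := fun i => if i = 1 then 2 else 0

lemma M1_equiv : isEquivModel M1 := by
  intro a
  refine ⟨fun x => ?_, fun {x y} h => ?_, fun {x y z} h1 h2 => ?_⟩
  · fin_cases a <;> simp [M1]
  · fin_cases a <;> fin_cases x <;> fin_cases y <;> simp_all [M1]
  · fin_cases a <;> fin_cases x <;> fin_cases y <;> fin_cases z <;> simp_all [M1]

lemma wfun_rel : ∀ i : Fin 3, M1.rel i 1 (wfun i) := by
  intro i; fin_cases i <;> simp [M1, wfun]

lemma wfun_ne : ∀ i : Fin 3, wfun i ≠ 1 := by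
  intro i; fin_cases i <;> simp [wfun]

lemma key (φ : Form (Fin 3)) (i : Fin 3)
    (h : ∀ t, M1.rel i 1 t → Sat M1 t φ) :
    ∀ t, M1.rel i (wfun i) t → Sat M1 t φ := by
  intro t ht
  exact h t ((M1_equiv i).trans (wfun_rel i) ht)

/-- no pseudo-anonymous announcement `φ⟡` applied to `M1` yields a model
bisimilar to `M1^{p!}`; in particular, any nonempty pseudo-anonymous update of `M1`
contains a `¬p`-state. -/
theorem stmt1 :
    isEquivModel M1 ∧
    (∀ φ : Form (Fin 3),
      ¬ ∃ Z : (Fin 3 × Fin 3) → Unit → Prop,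
          (∃ x y, Z x y) ∧ Bisim (updAnn M1 φ) Mp Z) ∧
    (∀ φ : Form (Fin 3),
      (∃ w i, Sat M1 w (.K i φ)) →
        ∃ w' i', Sat M1 w' (.K i' φ) ∧ ¬ Sat M1 w' (.atom 0)) := by
  refine ⟨M1_equiv, ?_, ?_⟩
  · rintro φ ⟨Z, ⟨x, u, hZ⟩, hB⟩
    have hx1 : x.1 = 1 := by
      have := hB.atoms x u hZ 0
      simp [updAnn, updA, prodUpd, M1, Mp] at this
      exact this
    obtain ⟨u', hrel, hZu⟩ := hB.back x u hZ x.2 () trivial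
    have hpre : ∀ t, M1.rel x.2 1 t → Sat M1 t φ := by
      have := hrel.1
      rw [hx1] at this
      exact this
    have hrel2 : (updAnn M1 φ).rel x.2 x (wfun x.2, x.2) := by
      refine ⟨?_, key φ x.2 hpre, ?_, Iff.rfl⟩
      · rw [hx1]; exact hpre
      · rw [hx1]; exact wfun_rel x.2
    obtain ⟨v, _, hZ2⟩ := hB.forth x u hZ x.2 (wfun x.2, x.2) hrel2
    have := hB.atoms _ v hZ2 0
    simp [updAnn, updA, prodUpd, M1, Mp] at this
    exact wfun_ne x.2 this
  · rintro φ ⟨w, i, hK⟩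
    by_cases h : w = 1
    · subst h
      exact ⟨wfun i, i, key φ i hK, fun hc => wfun_ne i hc.2⟩
    · exact ⟨w, i, hK, fun hc => h hc.2⟩
end

section
/- (Safe announcements are safe.) In any update of an epistemic model M by a safe pseudo-anonymous announcement of φ, for every state (s,a) of the updated model M^{φ⟡!} and every agent i ≠ a, there exists a state (s',a') with (s,a) ∼'_i (s',a') and a' ≠ a. That is, no agent other than the announcer knows who the announcer is, in any state of the updated model. -/
/-- safe announcements are safe: for every state `(s,a)` of the safe update
`M^{φ⟡!}` (i.e. `M,s ⊨ K_a ▲φ`) and every agent `i ≠ a`, there is a state `(s',a')` of the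
updated model with `(s,a) ∼'_i (s',a')` and `a' ≠ a`. -/
theorem stmt4 {Agt St : Type} [Fintype Agt] (hN : 3 ≤ Fintype.card Agt)
    (M : Model Agt St) (hM : isEquivModel M) (φ : Form Agt) (s : St) (a : Agt)
    (hleg : ∀ t, M.rel a s t → triSem M (fun v => Sat M v φ) t) :
    ∀ i : Agt, i ≠ a →
      ∃ (s' : St) (a' : Agt), (updSafe M φ).rel i (s, a) (s', a') ∧ a' ≠ a := by
  classical
  intro i hi
  -- s is related to itself by a, so ▲φ holds at s
  have hTri : triSem M (fun v => Sat M v φ) s := hleg s ((hM a).refl s)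
  obtain ⟨X, hXs, hpost⟩ := hTri
  obtain ⟨G, hG3, hGall⟩ := hpost s hXs
  -- pick b ∈ G with b ≠ a and b ≠ i
  have hcard : 2 < (G \ {a, i}).card + ({a, i} : Finset Agt).card := by
    calc 2 < G.card := by omega
    _ ≤ (G \ {a, i}).card + ({a, i} : Finset Agt).card :=
        Finset.card_le_card_sdiff_add_card
  have hpair : ({a, i} : Finset Agt).card ≤ 2 := Finset.card_insert_le _ _ |>.trans (by simp)
  have hne : (G \ {a, i}).Nonempty := by
    rw [← Finset.card_pos]; omega
  obtain ⟨b, hb⟩ := hne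
  rw [Finset.mem_sdiff, Finset.mem_insert, Finset.mem_singleton] at hb
  obtain ⟨hbG, hbai⟩ := hb
  push_neg at hbai
  obtain ⟨hba, hbi⟩ := hbai
  refine ⟨s, b, ⟨hleg, ?_, (hM i).refl s, ?_⟩, hba⟩
  · intro u hbu
    exact ⟨X, (hGall b hbG u hbu).2, hpost⟩
  · exact ⟨fun h => absurd h (Ne.symm hi), fun h => absurd h hbi⟩
end

section
/- The safe-announcement update coincides with a public announcement of safety: for all epistemic models M, states s, and formulas φ, ψ: M,s ⊨ [φ⟡!]ψ if and only if (M,s ⊨ ▲φ implies M^{▲φ!},s ⊨ ψ), where M^{▲φ!} is the public-announcement restriction of M to the states satisfying ▲φ. Moreover, the updated model M^{φ⟡!} from (s,a) is bisimilar to M^{▲φ!} from s via the relation Z with (t,b) Z t. -/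
lemma bisim_symm {Agt St₁ St₂ : Type} {M₁ : Model Agt St₁} {M₂ : Model Agt St₂}
    {Z : St₁ → St₂ → Prop} (h : Bisim M₁ M₂ Z) : Bisim M₂ M₁ (fun t s => Z s t) where
  atoms t s hZ n := (h.atoms s t hZ n).symm
  forth t s hZ a v hv := h.back s t hZ a v hv
  back t s hZ a u hu := h.forth s t hZ a u hu

lemma triSem_bisim {Agt St₁ St₂ : Type} {M₁ : Model Agt St₁} {M₂ : Model Agt St₂}
    {Z : St₁ → St₂ → Prop} (h : Bisim M₁ M₂ Z) {P₁ : St₁ → Prop} {P₂ : St₂ → Prop}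
    (hP : ∀ s t, Z s t → P₁ s → P₂ t) {s : St₁} {t : St₂} (hst : Z s t) :
    triSem M₁ P₁ s → triSem M₂ P₂ t := by
  rintro ⟨X, hXs, hX⟩
  refine ⟨fun u => ∃ w, Z w u ∧ X w, ⟨s, hst, hXs⟩, ?_⟩
  rintro u ⟨w, hZwu, hXw⟩
  obtain ⟨G, hG, hGa⟩ := hX w hXw
  refine ⟨G, hG, fun a ha v hv => ?_⟩
  obtain ⟨v', hv', hZ⟩ := h.back w u hZwu a v hv
  obtain ⟨hP₁, hX'⟩ := hGa a ha v' hv'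
  exact ⟨hP _ _ hZ hP₁, v', hZ, hX'⟩

lemma updA_bisim {Agt St₁ St₂ : Type} {M₁ : Model Agt St₁} {M₂ : Model Agt St₂}
    {Z : St₁ → St₂ → Prop} (h : Bisim M₁ M₂ Z)
    {pre₁ : Agt → St₁ → Prop} {pre₂ : Agt → St₂ → Prop}
    (hpre : ∀ b s t, Z s t → (pre₁ b s ↔ pre₂ b t)) :
    Bisim (updA M₁ pre₁) (updA M₂ pre₂) (fun p q => Z p.1 q.1 ∧ p.2 = q.2) where
  atoms p q hZ n := h.atoms p.1 q.1 hZ.1 n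
  forth p q hZ c u hu := by
    obtain ⟨hp, hu2, hrel, han⟩ := hu
    obtain ⟨v, hv, hZuv⟩ := h.forth p.1 q.1 hZ.1 c u.1 hrel
    have hp' : pre₁ q.2 p.1 := hZ.2 ▸ hp
    refine ⟨(v, u.2), ⟨(hpre _ _ _ hZ.1).mp hp', (hpre _ _ _ hZuv).mp hu2, hv, ?_⟩, hZuv, rfl⟩
    rwa [← hZ.2]
  back p q hZ c v hv := by
    obtain ⟨hq, hv2, hrel, han⟩ := hv
    obtain ⟨u, hu, hZuv⟩ := h.back p.1 q.1 hZ.1 c v.1 hrel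
    have hq' : pre₂ p.2 q.1 := hZ.2 ▸ hq
    refine ⟨(u, v.2), ⟨(hpre _ _ _ hZ.1).mpr hq', (hpre _ _ _ hZuv).mpr hv2, hu, ?_⟩, hZuv, rfl⟩
    rwa [hZ.2]

lemma sat_bisim {Agt : Type} (φ : Form Agt) :
    ∀ {St₁ St₂ : Type} (M₁ : Model Agt St₁) (M₂ : Model Agt St₂)
      (Z : St₁ → St₂ → Prop), Bisim M₁ M₂ Z → ∀ s t, Z s t →
      (Sat M₁ s φ ↔ Sat M₂ t φ) := by
  induction φ with
  | atom n => intro _ _ M₁ M₂ Z h s t hst; exact h.atoms s t hst n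
  | bot => intro _ _ _ _ _ _ _ _ _; exact Iff.rfl
  | imp φ ψ ihφ ihψ =>
    intro _ _ M₁ M₂ Z h s t hst
    exact imp_congr (ihφ M₁ M₂ Z h s t hst) (ihψ M₁ M₂ Z h s t hst)
  | and φ ψ ihφ ihψ =>
    intro _ _ M₁ M₂ Z h s t hst
    exact and_congr (ihφ M₁ M₂ Z h s t hst) (ihψ M₁ M₂ Z h s t hst)
  | K a φ ih =>
    intro _ _ M₁ M₂ Z h s t hst
    constructor
    · intro hs v hv
      obtain ⟨u, hu, hZ⟩ := h.back s t hst a v hv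
      exact (ih M₁ M₂ Z h u v hZ).mp (hs u hu)
    · intro ht u hu
      obtain ⟨v, hv, hZ⟩ := h.forth s t hst a u hu
      exact (ih M₁ M₂ Z h u v hZ).mpr (ht v hv)
  | tri φ ih =>
    intro _ _ M₁ M₂ Z h s t hst
    constructor
    · exact triSem_bisim h (fun u v hZ => (ih M₁ M₂ Z h u v hZ).mp) hst
    · exact triSem_bisim (bisim_symm h)
        (fun u v hZ => (ih M₁ M₂ Z h v u hZ).mpr) hst
  | annA φ ψ ihφ ihψ =>
    intro _ _ M₁ M₂ Z h s t hst
    have hpre : ∀ (b : Agt) s t, Z s t →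
        ((∀ u, M₁.rel b s u → Sat M₁ u φ) ↔ (∀ u, M₂.rel b t u → Sat M₂ u φ)) := by
      intro b x y hZ
      constructor
      · intro hs v hv
        obtain ⟨u, hu, hZ'⟩ := h.back x y hZ b v hv
        exact (ihφ M₁ M₂ Z h u v hZ').mp (hs u hu)
      · intro ht u hu
        obtain ⟨v, hv, hZ'⟩ := h.forth x y hZ b u hu
        exact (ihφ M₁ M₂ Z h u v hZ').mpr (ht v hv)
    have hb := updA_bisim h hpre
    constructor
    · intro hs a ha
      exact (ihψ _ _ _ hb (s, a) (t, a) ⟨hst, rfl⟩).mp (hs a ((hpre a s t hst).mpr ha))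
    · intro ht a ha
      exact (ihψ _ _ _ hb (s, a) (t, a) ⟨hst, rfl⟩).mpr (ht a ((hpre a s t hst).mp ha))
  | annS φ ψ ihφ ihψ =>
    intro _ _ M₁ M₂ Z h s t hst
    have htri : ∀ u v, Z u v →
        (triSem M₁ (fun w => Sat M₁ w φ) u ↔ triSem M₂ (fun w => Sat M₂ w φ) v) := by
      intro u v hZ
      constructor
      · exact triSem_bisim h (fun x y hZ' => (ihφ M₁ M₂ Z h x y hZ').mp) hZ
      · exact triSem_bisim (bisim_symm h)
          (fun x y hZ' => (ihφ M₁ M₂ Z h y x hZ').mpr) hZ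
    have hpre : ∀ (b : Agt) s t, Z s t →
        ((∀ u, M₁.rel b s u → triSem M₁ (fun w => Sat M₁ w φ) u) ↔
         (∀ u, M₂.rel b t u → triSem M₂ (fun w => Sat M₂ w φ) u)) := by
      intro b x y hZ
      constructor
      · intro hs v hv
        obtain ⟨u, hu, hZ'⟩ := h.back x y hZ b v hv
        exact (htri u v hZ').mp (hs u hu)
      · intro ht u hu
        obtain ⟨v, hv, hZ'⟩ := h.forth x y hZ b u hu
        exact (htri u v hZ').mpr (ht v hv)
    have hb := updA_bisim h hpre
    constructor
    · intro hs a ha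
      exact (ihψ _ _ _ hb (s, a) (t, a) ⟨hst, rfl⟩).mp (hs a ((hpre a s t hst).mpr ha))
    · intro ht a ha
      exact (ihψ _ _ _ hb (s, a) (t, a) ⟨hst, rfl⟩).mpr (ht a ((hpre a s t hst).mp ha))

/-- From `▲P s` one can extract a witnessing group whose members know `▲P`. -/
lemma tri_step {Agt St : Type} {M : Model Agt St} {P : St → Prop} {s : St}
    (h : triSem M P s) :
    ∃ G : Finset Agt, G.card = 3 ∧ ∀ a ∈ G, ∀ t, M.rel a s t → P t ∧ triSem M P t := by
  obtain ⟨X, hXs, hX⟩ := h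
  obtain ⟨G, hG, hGa⟩ := hX s hXs
  exact ⟨G, hG, fun a ha t ht => ⟨(hGa a ha t ht).1, X, (hGa a ha t ht).2, hX⟩⟩

/-- The bisimulation between the safe update and the public announcement of safety. -/
lemma safe_bisim {Agt St : Type} (M : Model Agt St) (hM : isEquivModel M) (φ : Form Agt) :
    Bisim (updSafe M φ) (restrict M (fun t => Sat M t (.tri φ)))
      (fun p t => p.1 = t ∧ Sat M p.1 (.K p.2 (.tri φ))) where
  atoms p t hZ n := by
    show M.val n p.1 ↔ M.val n t
    rw [hZ.1]
  forth p t hZ c u hu := by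
    obtain ⟨hp, hu2, hrel, _⟩ := hu
    obtain ⟨hpt, hK⟩ := hZ
    refine ⟨u.1, ⟨?_, ?_, hpt ▸ hrel⟩, rfl, hu2⟩
    · rw [← hpt]; exact hK p.1 ((hM p.2).refl p.1)
    · exact hu2 u.1 ((hM u.2).refl u.1)
  back p t hZ c v hv := by
    obtain ⟨htv, hvv, hrel⟩ := hv
    obtain ⟨hpt, hK⟩ := hZ
    have hrel' : M.rel c p.1 v := hpt.symm ▸ hrel
    by_cases hbc : p.2 = c
    · have hKv : ∀ w, M.rel c v w → triSem M (fun u => Sat M u φ) w := by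
        intro w hw
        exact hK w (hbc.symm ▸ (hM c).trans hrel' hw)
      exact ⟨(v, c), ⟨hK, hKv, hrel', by simp [anonRel, hbc]⟩, rfl, hKv⟩
    · obtain ⟨G, hG, hGa⟩ := tri_step hvv
      obtain ⟨b', hb'G, hb'c⟩ := Finset.exists_mem_ne (by omega : 1 < G.card) c
      refine ⟨(v, b'), ⟨hK, fun w hw => (hGa b' hb'G w hw).2, hrel', ?_⟩, rfl,
        fun w hw => (hGa b' hb'G w hw).2⟩
      simp [anonRel, hbc, hb'c]

/-- `M,s ⊨ [φ⟡!]ψ` iff (`M,s ⊨ ▲φ` implies `M^{▲φ!},s ⊨ ψ`), where `M^{▲φ!}`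
is the public-announcement restriction of `M` to `⟦▲φ⟧`; moreover, for each legal `(s,a)`,
the safe update `M^{φ⟡!}` from `(s,a)` is bisimilar to `M^{▲φ!}` from `s` via the relation
`Z` linking `(t,b)` (legal) with `t`. -/
theorem stmt6 {Agt St : Type} [Fintype Agt] (hN : 3 ≤ Fintype.card Agt)
    (M : Model Agt St) (hM : isEquivModel M) (s : St) (φ ψ : Form Agt) :
    (Sat M s (.annS φ ψ) ↔
      (Sat M s (.tri φ) → Sat (restrict M (fun t => Sat M t (.tri φ))) s ψ)) ∧
    (∀ a : Agt, Sat M s (.K a (.tri φ)) →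
      (Bisim (updSafe M φ) (restrict M (fun t => Sat M t (.tri φ)))
        (fun p t => p.1 = t ∧ Sat M p.1 (.K p.2 (.tri φ))) ∧
       ((s, a).1 = s ∧ Sat M (s, a).1 (.K (s, a).2 (.tri φ))))) := by
  have hb := safe_bisim M hM φ
  constructor
  · constructor
    · intro h htri
      obtain ⟨G, hG, hGa⟩ := tri_step htri
      obtain ⟨a, ha⟩ : G.Nonempty := by rw [← Finset.card_pos, hG]; omega
      have hpre : ∀ t, M.rel a s t → triSem M (fun v => Sat M v φ) t :=
        fun t ht => (hGa a ha t ht).2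
      exact (sat_bisim ψ _ _ _ hb (s, a) s ⟨rfl, hpre⟩).mp (h a hpre)
    · intro h a ha
      have htri : Sat M s (.tri φ) := ha s ((hM a).refl s)
      exact (sat_bisim ψ _ _ _ hb (s, a) s ⟨rfl, ha⟩).mpr (h htri)
  · intro a ha
    exact ⟨hb, rfl, ha⟩
end

section
/- The safety operator is definable from the safe-announcement modality: for any model M, state s, and formula φ: M,s ⊨ ▲φ if and only if M,s ⊨ ¬[φ⟡!]⊥, i.e., there exists an agent who can safely announce φ. -/
/-- `▲` is definable from safe announcements:
`M,s ⊨ ▲φ` iff `M,s ⊨ ¬[φ⟡!]⊥`. -/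
theorem stmt7 {Agt St : Type} [Fintype Agt] (hN : 3 ≤ Fintype.card Agt)
    (M : Model Agt St) (hM : isEquivModel M) (s : St) (φ : Form Agt) :
    Sat M s (.tri φ) ↔ Sat M s (Form.neg (.annS φ .bot)) := by
  simp only [Form.neg, Sat]
  constructor
  · intro h hcon
    -- unfold fixpoint once to find a witnessing agent
    obtain ⟨X, hXs, hX⟩ := h
    obtain ⟨G, hG, hGa⟩ := hX s hXs
    have hGne : G.Nonempty := Finset.card_pos.mp (by omega)
    obtain ⟨a, ha⟩ := hGne
    exact hcon a (fun t hst => ⟨X, (hGa a ha t hst).2, hX⟩)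
  · intro h
    by_contra hns
    apply h
    intro a hKa
    exact hns (hKa s ((hM a).refl s))
end

section
/- (Soundness of the Induction rule.) If the formula φ → ⋁_{G∈N³} E_G φ is valid on all epistemic models, then φ → ▲φ is valid on all epistemic models. Equivalently: if ⟦φ⟧_M ⊆ ⟦⋁_{G∈N³} E_G φ⟧_M for every model M, then ⟦φ⟧_M ⊆ ⟦▲φ⟧_M for every model M; proved by showing M,s ⊨ φ implies M,s ⊨ ▲_n φ for all n by induction. -/
/-- soundness of the Induction rule: if `φ → ⋁_{G∈N³} E_G φ` is valid on
all epistemic models, then `φ → ▲φ` is valid on all epistemic models. -/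
theorem stmt9 {Agt : Type} [Fintype Agt] (φ : Form Agt)
    (h : ∀ (St : Type) (M : Model Agt St), isEquivModel M → ∀ s : St,
      Sat M s φ → ∃ G : Finset Agt, G.card = 3 ∧ ∀ a ∈ G, Sat M s (.K a φ)) :
    ∀ (St : Type) (M : Model Agt St), isEquivModel M → ∀ s : St,
      Sat M s φ → Sat M s (.tri φ) := by
  intro St M hM s hs
  refine ⟨fun t => Sat M t φ, hs, fun t ht => ?_⟩
  obtain ⟨G, hG, hE⟩ := h St M hM t ht
  exact ⟨G, hG, fun a ha u hu => ⟨hE a ha u hu, hE a ha u hu⟩⟩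
end

section
/- (Path characterization of safety.) M,s ⊨ ▲φ if and only if there exists a group assignment function f for M with f(s) ≠ ∅ such that φ is true at every state on every f-consistent path starting at s. Here a group assignment function is a map f : S → P(N) with f(t) ∈ N³ or f(t) = ∅ for all t, such that whenever i ∈ f(t) and t ∼_i t', then f(t') ≠ ∅; and an f-consistent path is a finite sequence s₀s₁…s_m with s_k ∼_a s_{k+1} for some a ∈ f(s_k) for each k < m. -/
/-- path characterization of safety: `M,s ⊨ ▲φ` iff there is a group
assignment function `f` with `f(s) ≠ ∅` such that `φ` is true at every state on every
`f`-consistent path starting at `s`. -/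
theorem stmt12 {Agt St : Type} [Fintype Agt] (M : Model Agt St) (hM : isEquivModel M)
    (s : St) (φ : Form Agt) :
    Sat M s (.tri φ) ↔
      ∃ f : St → Finset Agt, GroupAssign M f ∧ f s ≠ ∅ ∧
        ∀ (m : ℕ) (σ : Fin (m + 1) → St), σ 0 = s → FPath M f m σ →
          ∀ k : Fin (m + 1), Sat M (σ k) φ := by
  classical
  constructor
  · rintro ⟨X, hXs, hpost⟩
    let f : St → Finset Agt := fun t => if h : X t then (hpost t h).choose else ∅
    have hf3 : ∀ t (h : X t), (f t).card = 3 ∧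
        ∀ a ∈ f t, ∀ u, M.rel a t u → Sat M u φ ∧ X u := by
      intro t h
      simp only [f, dif_pos h]
      exact ⟨(hpost t h).choose_spec.1, (hpost t h).choose_spec.2⟩
    have hXP : ∀ t, X t → Sat M t φ := by
      intro t h
      obtain ⟨hc, hprop⟩ := hf3 t h
      obtain ⟨a, ha⟩ := Finset.card_pos.mp (by omega : 0 < (f t).card)
      exact (hprop a ha t ((hM a).refl t)).1
    refine ⟨f, ⟨?_, ?_⟩, ?_, ?_⟩
    · intro t
      by_cases h : X t
      · exact Or.inr (hf3 t h).1
      · exact Or.inl (by simp [f, dif_neg h])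
    · intro t t' i hi hrel
      by_cases h : X t
      · have hX' := ((hf3 t h).2 i hi t' hrel).2
        have hc := (hf3 t' hX').1
        intro he; rw [he] at hc; simp at hc
      · simp only [f, dif_neg h] at hi
        exact absurd hi (Finset.notMem_empty i)
    · intro he
      have hc := (hf3 s hXs).1
      rw [he] at hc; simp at hc
    · intro m σ h0 hσ
      have hXk : ∀ k : Fin (m+1), X (σ k) := by
        intro k
        induction k using Fin.induction with
        | zero => rw [h0]; exact hXs
        | succ i ih =>
          obtain ⟨a, ha, hrel⟩ := hσ i
          exact ((hf3 _ ih).2 a ha _ hrel).2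
      intro k; exact hXP _ (hXk k)
  · rintro ⟨f, ⟨hf1, hf2⟩, hfs, hpath⟩
    refine ⟨fun t => f t ≠ ∅ ∧ ∃ m : ℕ, ∃ σ : Fin (m+1) → St,
        σ 0 = s ∧ FPath M f m σ ∧ σ (Fin.last m) = t,
      ⟨hfs, 0, fun _ => s, rfl, fun k => k.elim0, rfl⟩, ?_⟩
    rintro t ⟨hft, m, σ, h0, hσ, hlast⟩
    refine ⟨f t, ?_, ?_⟩
    · rcases hf1 t with h | h
      · exact absurd h hft
      · exact h
    · intro a ha u hrel
      set σ' : Fin (m+2) → St := Fin.snoc σ u with hσ'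
      have h0' : σ' 0 = s := by
        have h : (0 : Fin (m+2)) = Fin.castSucc 0 := rfl
        rw [hσ', h, Fin.snoc_castSucc]; exact h0
      have hlast' : σ' (Fin.last (m+1)) = u := by
        rw [hσ', Fin.snoc_last]
      have hpath' : FPath M f (m+1) σ' := by
        intro k
        induction k using Fin.lastCases with
        | last =>
          refine ⟨a, ?_, ?_⟩
          · have h1 : σ' (Fin.last m).castSucc = t := by
              rw [hσ', Fin.snoc_castSucc, hlast]
            rw [h1]; exact ha
          · have h1 : σ' (Fin.last m).castSucc = t := by
              rw [hσ', Fin.snoc_castSucc, hlast]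
            have h2 : σ' (Fin.last m).succ = u := by
              rw [Fin.succ_last]; exact hlast'
            rw [h1, h2]; exact hrel
        | cast j =>
          obtain ⟨b, hb, hbrel⟩ := hσ j
          refine ⟨b, ?_, ?_⟩
          · have h1 : σ' (j.castSucc).castSucc = σ j.castSucc := by
              rw [hσ', Fin.snoc_castSucc]
            rw [h1]; exact hb
          · have h1 : σ' (j.castSucc).castSucc = σ j.castSucc := by
              rw [hσ', Fin.snoc_castSucc]
            have h2 : σ' (j.castSucc).succ = σ j.succ := by
              rw [Fin.succ_castSucc, hσ', Fin.snoc_castSucc]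
            rw [h1, h2]; exact hbrel
      have hPu : Sat M u φ := by
        have := hpath (m+1) σ' h0' hpath' (Fin.last (m+1))
        rwa [hlast'] at this
      have hfu : f u ≠ ∅ := hf2 t u a ha hrel
      exact ⟨hPu, hfu, m+1, σ', h0', hpath', hlast'⟩
end

section
/- Common knowledge among some triple implies safety: for every epistemic model M and state s, if M,s ⊨ ⋁_{G∈N³} C_G φ then M,s ⊨ ▲φ, where C_G is common knowledge in group G. The converse fails: there is a model and state where ▲φ holds but no 3-agent group has common knowledge of φ. -/
/-- Common knowledge in group `G` (semantically): `φ` holds at every state reachable by a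
finite path of `∼_i`-steps with `i ∈ G`. -/
def CK {Agt St : Type} (M : Model Agt St) (G : Finset Agt) (P : St → Prop) (s : St) : Prop :=
  ∀ t, Relation.ReflTransGen (fun x y => ∃ a ∈ G, M.rel a x y) s t → P t


/-- Partition ids for the counterexample model. -/
def pfun : Fin 4 → Fin 4 → Fin 4 :=
  ![![0,0,2,3], ![0,1,2,3], ![0,1,2,1], ![0,1,0,3]]

/-- Counterexample model. -/
def Mc : Model (Fin 4) (Fin 4) where
  rel i x y := pfun i x = pfun i y
  val n t := n = 0 ∧ t.val < 2

/-- common knowledge of `φ` among some triple implies `▲φ`, but the converse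
fails: there is a 4-agent model and state where `▲φ` holds yet no 3-agent group has common
knowledge of `φ`. -/
theorem stmt14 :
    (∀ (Agt St : Type) [Fintype Agt] (M : Model Agt St), isEquivModel M →
      ∀ (s : St) (φ : Form Agt),
        (∃ G : Finset Agt, G.card = 3 ∧ CK M G (fun t => Sat M t φ) s) →
        Sat M s (.tri φ)) ∧
    (∃ (St : Type) (M : Model (Fin 4) St), isEquivModel M ∧
      ∃ (s : St) (φ : Form (Fin 4)),
        Sat M s (.tri φ) ∧
        ¬ ∃ G : Finset (Fin 4), G.card = 3 ∧ CK M G (fun t => Sat M t φ) s) := by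
  constructor
  · rintro Agt St _ M hEq s φ ⟨G, hG, hCK⟩
    exact ⟨fun t => CK M G (fun u => Sat M u φ) t, hCK,
      fun t hX => ⟨G, hG, fun a ha u hrel =>
        ⟨hX u (.single ⟨a, ha, hrel⟩), fun v hv => hX v (.head ⟨a, ha, hrel⟩ hv)⟩⟩⟩
  · refine ⟨Fin 4, Mc, fun a => ⟨fun _ => rfl, Eq.symm, Eq.trans⟩, 0, .atom 0, ?_, ?_⟩
    · refine ⟨fun t => t.val < 2, by decide, ?_⟩
      show ∀ t : Fin 4, t.val < 2 → ∃ G : Finset (Fin 4), G.card = 3 ∧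
        ∀ a ∈ G, ∀ u : Fin 4, pfun a t = pfun a u → ((0:ℕ) = 0 ∧ u.val < 2) ∧ u.val < 2
      decide
    · rintro ⟨G, hG, hCK⟩
      have h : ∀ G : Finset (Fin 4), G.card = 3 →
          (3 : Fin 4) ∈ G ∨ ((0 : Fin 4) ∈ G ∧ (2 : Fin 4) ∈ G) := by decide
      rcases h G hG with h | ⟨h0, h2⟩
      · have h2 : Mc.val 0 2 :=
          hCK 2 (.single ⟨3, h, show pfun 3 0 = pfun 3 2 by decide⟩)
        exact absurd h2.2 (by decide)
      · have h3 : Mc.val 0 3 :=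
          hCK 3 (Relation.ReflTransGen.head (b := 1)
            ⟨0, h0, show pfun 0 0 = pfun 0 1 by decide⟩
            (.single ⟨2, h2, show pfun 2 1 = pfun 2 3 by decide⟩))
        exact absurd h3.2 (by decide)
end

section
/- (Canonical model safety lemma, left-to-right direction.) In the finite canonical model M^γ for formula γ built from maximal consistent subsets of the closure cl(γ): if ▲φ ∈ cl(γ) and ▲φ ∈ Γ, then the function f defined by f(Δ) = G for some G with E_G▲φ ∈ Δ (and f(Δ) = ∅ if no such G exists) is a group assignment function with f(Γ) ≠ ∅, and every f-consistent path from Γ consists only of sets containing φ. -/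
def bigAnd {Agt : Type} : List (Form Agt) → Form Agt
  | [] => .imp .bot .bot
  | φ :: l => .and φ (bigAnd l)

def bigOr {Agt : Type} : List (Form Agt) → Form Agt
  | [] => .bot
  | φ :: l => .imp (Form.neg φ) (bigOr l)

/-- `E_G φ = ⋀_{i∈G} K_i φ`. -/
noncomputable def EG {Agt : Type} (G : Finset Agt) (φ : Form Agt) : Form Agt :=
  bigAnd (G.toList.map (fun a => Form.K a φ))

/-- The 3-element subsets of the (finite) agent set. -/
def triples (Agt : Type) [Fintype Agt] [DecidableEq Agt] : Finset (Finset Agt) :=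
  Finset.univ.powersetCard 3

/-- `⋁_{G ∈ N³} E_G φ`. -/
noncomputable def triDisj {Agt : Type} [Fintype Agt] [DecidableEq Agt] (φ : Form Agt) : Form Agt :=
  bigOr ((triples Agt).toList.map (fun G => EG G φ))

/-- The proof system S▲: propositional logic, S5 for each `K_i`, the Mix axiom
`▲φ → ⋁_{G∈N³} E_G(φ ∧ ▲φ)`, the Induction rule and the Monotonicity rule. -/
inductive Prov {Agt : Type} [Fintype Agt] [DecidableEq Agt] : Form Agt → Prop
  | a1 {φ ψ} : Prov (.imp φ (.imp ψ φ))
  | a2 {φ ψ χ} : Prov (.imp (.imp φ (.imp ψ χ)) (.imp (.imp φ ψ) (.imp φ χ)))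
  | a3 {φ} : Prov (.imp (.imp (.imp φ .bot) .bot) φ)
  | andI {φ ψ} : Prov (.imp φ (.imp ψ (.and φ ψ)))
  | andE1 {φ ψ} : Prov (.imp (.and φ ψ) φ)
  | andE2 {φ ψ} : Prov (.imp (.and φ ψ) ψ)
  | mp {φ ψ} : Prov (.imp φ ψ) → Prov φ → Prov ψ
  | kdist {a φ ψ} : Prov (.imp (.K a (.imp φ ψ)) (.imp (.K a φ) (.K a ψ)))
  | truth {a φ} : Prov (.imp (.K a φ) φ)
  | negintro {a φ} : Prov (.imp (Form.neg (.K a φ)) (.K a (Form.neg (.K a φ))))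
  | nec {a φ} : Prov φ → Prov (.K a φ)
  | mix {φ} : Prov (.imp (.tri φ) (triDisj (.and φ (.tri φ))))
  | ind {φ} : Prov (.imp φ (triDisj φ)) → Prov (.imp φ (.tri φ))
  | mono {φ ψ} : Prov (.imp φ ψ) → Prov (.imp (.tri φ) (.tri ψ))

/-- The closure `cl(γ)`: subformulas of `γ`, single negations, and `E_G ▲φ` for every
triple `G` whenever `▲φ` belongs to it. -/
inductive InCl {Agt : Type} [Fintype Agt] [DecidableEq Agt] (γ : Form Agt) : Form Agt → Prop
  | self : InCl γ γ
  | imp1 {φ ψ} : InCl γ (.imp φ ψ) → InCl γ φ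
  | imp2 {φ ψ} : InCl γ (.imp φ ψ) → InCl γ ψ
  | and1 {φ ψ} : InCl γ (.and φ ψ) → InCl γ φ
  | and2 {φ ψ} : InCl γ (.and φ ψ) → InCl γ ψ
  | ksub {a φ} : InCl γ (.K a φ) → InCl γ φ
  | trisub {φ} : InCl γ (.tri φ) → InCl γ φ
  | annAsub1 {φ ψ} : InCl γ (.annA φ ψ) → InCl γ φ
  | annAsub2 {φ ψ} : InCl γ (.annA φ ψ) → InCl γ ψ
  | annSsub1 {φ ψ} : InCl γ (.annS φ ψ) → InCl γ φ
  | annSsub2 {φ ψ} : InCl γ (.annS φ ψ) → InCl γ ψ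
  | singleNeg {φ} : InCl γ φ → (∀ ψ, φ ≠ Form.neg ψ) → InCl γ (Form.neg φ)
  | egtri {φ G} : InCl γ (.tri φ) → G ∈ triples Agt → InCl γ (EG G (.tri φ))

/-- A set of formulas is consistent if no finite conjunction from it provably implies ⊥. -/
def Consistent {Agt : Type} [Fintype Agt] [DecidableEq Agt] (Γ : Set (Form Agt)) : Prop :=
  ¬ ∃ l : List (Form Agt), (∀ φ ∈ l, φ ∈ Γ) ∧ Prov (.imp (bigAnd l) .bot)

/-- Maximal consistent subsets of the closure `cl(γ)`. -/
def MCS {Agt : Type} [Fintype Agt] [DecidableEq Agt] (γ : Form Agt)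
    (Γ : Set (Form Agt)) : Prop :=
  (∀ φ ∈ Γ, InCl γ φ) ∧ Consistent Γ ∧
    ∀ Δ : Set (Form Agt), (∀ φ ∈ Δ, InCl γ φ) → Consistent Δ → Γ ⊆ Δ → Γ = Δ

/-- The canonical model for `γ`: states are the maximal consistent subsets of `cl(γ)`;
`Γ ∼_i Δ` iff they contain the same `K_i`-formulas; `p` true at `Γ` iff `p ∈ Γ`. -/
def canM {Agt : Type} [Fintype Agt] [DecidableEq Agt] (γ : Form Agt) :
    Model Agt {Γ : Set (Form Agt) // MCS γ Γ} where
  rel i Γ Δ := ∀ φ : Form Agt, (Form.K i φ ∈ Γ.1 ↔ Form.K i φ ∈ Δ.1)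
  val n Γ := Form.atom n ∈ Γ.1

section Aux

variable {Agt : Type} [Fintype Agt] [DecidableEq Agt]

open Form

private lemma pid {A : Form Agt} : Prov (A.imp A) :=
  Prov.mp (Prov.mp (Prov.a2 (φ := A) (ψ := A.imp A) (χ := A)) Prov.a1) Prov.a1

private lemma liftP {A B : Form Agt} (h : Prov B) : Prov (A.imp B) := Prov.mp Prov.a1 h

private lemma mp1 {A B C : Form Agt} (p : Prov (A.imp (B.imp C))) (q : Prov (A.imp B)) :
    Prov (A.imp C) := Prov.mp (Prov.mp Prov.a2 p) q

private lemma mp2 {A B C D : Form Agt} (p : Prov (A.imp (B.imp (C.imp D))))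
    (q : Prov (A.imp (B.imp C))) : Prov (A.imp (B.imp D)) :=
  mp1 (mp1 (liftP Prov.a2) p) q

private lemma syl {A B C : Form Agt} (p : Prov (A.imp B)) (q : Prov (B.imp C)) :
    Prov (A.imp C) := mp1 (liftP q) p

private lemma flipP {A B C : Form Agt} (h : Prov (A.imp (B.imp C))) :
    Prov (B.imp (A.imp C)) :=
  mp2 (mp2 (liftP (liftP h)) (liftP pid)) Prov.a1

private lemma contrap {A B : Form Agt} (h : Prov (A.imp B)) :
    Prov ((B.imp .bot).imp (A.imp .bot)) := mp2 Prov.a1 (liftP h)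

private lemma exportP {A B C : Form Agt} (h : Prov ((A.and B).imp C)) :
    Prov (A.imp (B.imp C)) := mp2 (liftP (liftP h)) Prov.andI

private lemma efq {A : Form Agt} : Prov (Form.bot.imp A) := syl Prov.a1 Prov.a3

private lemma andIntroP {A B C : Form Agt} (p : Prov (A.imp B)) (q : Prov (A.imp C)) :
    Prov (A.imp (B.and C)) := mp1 (mp1 (liftP Prov.andI) p) q

private lemma bigAnd_proj {l : List (Form Agt)} {ψ : Form Agt} (h : ψ ∈ l) :
    Prov ((bigAnd l).imp ψ) := by
  induction l with
  | nil => cases h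
  | cons a l ih =>
    rcases List.mem_cons.mp h with h | h
    · subst h; exact Prov.andE1
    · exact syl Prov.andE2 (ih h)

private lemma bigAnd_sub {l₁ l₂ : List (Form Agt)} (h : ∀ ψ ∈ l₂, ψ ∈ l₁) :
    Prov ((bigAnd l₁).imp (bigAnd l₂)) := by
  induction l₂ with
  | nil => exact liftP pid
  | cons a l ih =>
    exact andIntroP (bigAnd_proj (h a (List.mem_cons_self)))
      (ih fun ψ hψ => h ψ (List.mem_cons_of_mem _ hψ))

private lemma bigAnd_monoK {ψ χ : Form Agt} (h : Prov (ψ.imp χ)) (l : List Agt) :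
    Prov ((bigAnd (l.map (fun a => Form.K a ψ))).imp
      (bigAnd (l.map (fun a => Form.K a χ)))) := by
  induction l with
  | nil => exact liftP pid
  | cons a l ih =>
    exact andIntroP (syl Prov.andE1 (Prov.mp Prov.kdist (Prov.nec h))) (syl Prov.andE2 ih)

private lemma EG_mono {ψ χ : Form Agt} (G : Finset Agt) (h : Prov (ψ.imp χ)) :
    Prov ((EG G ψ).imp (EG G χ)) := bigAnd_monoK h G.toList

private lemma EG_proj {ψ : Form Agt} {G : Finset Agt} {a : Agt} (ha : a ∈ G) :
    Prov ((EG G ψ).imp (Form.K a ψ)) :=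
  bigAnd_proj (List.mem_map.mpr ⟨a, (Finset.mem_toList).mpr ha, rfl⟩)

private lemma orConsP {x y r₁ r₂ : Form Agt} (hxy : Prov (x.imp y)) (hr : Prov (r₁.imp r₂)) :
    Prov (((x.imp .bot).imp r₁).imp ((y.imp .bot).imp r₂)) := by
  have p : Prov ((((x.imp .bot).imp r₁)).imp ((y.imp .bot).imp (x.imp .bot))) :=
    liftP (contrap hxy)
  have q : Prov ((((x.imp .bot).imp r₁)).imp ((y.imp .bot).imp ((x.imp .bot).imp r₁))) :=
    Prov.a1
  exact mp2 (liftP (liftP hr)) (mp2 q p)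

private lemma bigOr_mono {α : Type} (L : List α) (g h : α → Form Agt)
    (hp : ∀ x ∈ L, Prov ((g x).imp (h x))) :
    Prov ((bigOr (L.map g)).imp (bigOr (L.map h))) := by
  induction L with
  | nil => exact pid
  | cons x L ih =>
    exact orConsP (hp x (List.mem_cons_self))
      (ih fun y hy => hp y (List.mem_cons_of_mem _ hy))

private lemma bigOr_elim {L : List (Form Agt)} {φ : Form Agt}
    (h : ∀ x ∈ L, Prov (x.imp φ)) : Prov ((bigOr L).imp φ) := by
  induction L with
  | nil => exact efq
  | cons x L ih =>
    have hx := h x (List.mem_cons_self)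
    have hr := ih fun y hy => h y (List.mem_cons_of_mem _ hy)
    -- A := (x→⊥)→r, B := φ→⊥
    have s1 : Prov ((((x.imp .bot).imp (bigOr L))).imp ((φ.imp .bot).imp (x.imp .bot))) :=
      liftP (contrap hx)
    have s2 : Prov ((((x.imp .bot).imp (bigOr L))).imp
        ((φ.imp .bot).imp ((x.imp .bot).imp (bigOr L)))) := Prov.a1
    have s3 : Prov ((((x.imp .bot).imp (bigOr L))).imp ((φ.imp .bot).imp (bigOr L))) :=
      mp2 s2 s1
    have s4 : Prov ((((x.imp .bot).imp (bigOr L))).imp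
        ((φ.imp .bot).imp ((bigOr L).imp .bot))) := liftP (contrap hr)
    have s5 : Prov ((((x.imp .bot).imp (bigOr L))).imp ((φ.imp .bot).imp .bot)) :=
      mp2 s4 s3
    exact syl s5 Prov.a3

/-- Derivability from a set of hypotheses. -/
def Deriv (Γ : Set (Form Agt)) (ψ : Form Agt) : Prop :=
  ∃ l : List (Form Agt), (∀ χ ∈ l, χ ∈ Γ) ∧ Prov ((bigAnd l).imp ψ)

private lemma deriv_mem {Γ : Set (Form Agt)} {ψ : Form Agt} (h : ψ ∈ Γ) : Deriv Γ ψ :=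
  ⟨[ψ], by simpa using h, bigAnd_proj (List.mem_singleton.mpr rfl)⟩

private lemma deriv_imp {Γ : Set (Form Agt)} {ψ χ : Form Agt} (h : Deriv Γ ψ)
    (hp : Prov (ψ.imp χ)) : Deriv Γ χ := by
  obtain ⟨l, hl, hd⟩ := h
  exact ⟨l, hl, syl hd hp⟩

private lemma deriv_mp {Γ : Set (Form Agt)} {ψ χ : Form Agt} (h : Deriv Γ (ψ.imp χ))
    (h' : Deriv Γ ψ) : Deriv Γ χ := by
  obtain ⟨l₁, hl₁, hd₁⟩ := h
  obtain ⟨l₂, hl₂, hd₂⟩ := h'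
  refine ⟨l₁ ++ l₂, ?_, ?_⟩
  · intro x hx
    rcases List.mem_append.mp hx with hx | hx
    · exact hl₁ x hx
    · exact hl₂ x hx
  · have s₁ : Prov ((bigAnd (l₁ ++ l₂)).imp (bigAnd l₁)) :=
      bigAnd_sub fun x hx => List.mem_append.mpr (Or.inl hx)
    have s₂ : Prov ((bigAnd (l₁ ++ l₂)).imp (bigAnd l₂)) :=
      bigAnd_sub fun x hx => List.mem_append.mpr (Or.inr hx)
    exact mp1 (syl s₁ hd₁) (syl s₂ hd₂)

private lemma deriv_union {Γ : Set (Form Agt)} {χ ψ : Form Agt}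
    (h : Deriv (Γ ∪ {χ}) ψ) : Deriv Γ (χ.imp ψ) := by
  classical
  obtain ⟨l, hl, hd⟩ := h
  refine ⟨l.filter (fun x => x ≠ χ), ?_, ?_⟩
  · intro x hx
    have := List.mem_filter.mp hx
    rcases hl x this.1 with hx' | hx'
    · exact hx'
    · exact absurd (by simpa using hx') (by simpa using this.2)
  · have hsub : ∀ x ∈ l, x ∈ χ :: l.filter (fun x => x ≠ χ) := by
      intro x hx
      by_cases hxχ : x = χ
      · exact hxχ ▸ List.mem_cons_self
      · exact List.mem_cons_of_mem _ (List.mem_filter.mpr ⟨hx, by simpa using hxχ⟩)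
    have s : Prov ((bigAnd (χ :: l.filter (fun x => x ≠ χ))).imp ψ) :=
      syl (bigAnd_sub hsub) hd
    exact flipP (exportP s)

private lemma incons_of_deriv_bot {Γ : Set (Form Agt)} (h : Deriv Γ Form.bot) :
    ¬ Consistent Γ := fun hc => hc h

private lemma mcs_closed {γ : Form Agt} {Γ : Set (Form Agt)} {ψ : Form Agt}
    (hΓ : MCS γ Γ) (hcl : InCl γ ψ) (hd : Deriv Γ ψ) : ψ ∈ Γ := by
  have hcons : Consistent (Γ ∪ {ψ}) := by
    intro hex
    have hbot : Deriv (Γ ∪ {ψ}) Form.bot := hex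
    have : Deriv Γ (ψ.imp .bot) := deriv_union hbot
    exact hΓ.2.1 (deriv_mp this hd)
  have heq : Γ = Γ ∪ {ψ} := by
    refine hΓ.2.2 (Γ ∪ {ψ}) ?_ hcons Set.subset_union_left
    intro x hx
    rcases hx with hx | hx
    · exact hΓ.1 x hx
    · exact (Set.mem_singleton_iff.mp hx) ▸ hcl
  rw [heq]
  exact Or.inr rfl

private lemma mcs_disj {γ : Form Agt} {Γ : Set (Form Agt)} (hΓ : MCS γ Γ) :
    ∀ L : List (Form Agt), (∀ χ ∈ L, InCl γ χ) → Deriv Γ (bigOr L) →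
      ∃ χ ∈ L, χ ∈ Γ := by
  intro L
  induction L with
  | nil => intro _ hd; exact absurd hΓ.2.1 (incons_of_deriv_bot hd)
  | cons χ L ih =>
    intro hincl hd
    by_cases hχ : χ ∈ Γ
    · exact ⟨χ, List.mem_cons_self, hχ⟩
    · have hincons : ¬ Consistent (Γ ∪ {χ}) := by
        intro hc
        have heq : Γ = Γ ∪ {χ} := by
          refine hΓ.2.2 (Γ ∪ {χ}) ?_ hc Set.subset_union_left
          intro x hx
          rcases hx with hx | hx
          · exact hΓ.1 x hx
          · exact (Set.mem_singleton_iff.mp hx) ▸ hincl χ (List.mem_cons_self)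
        exact hχ (heq ▸ (Or.inr rfl : χ ∈ Γ ∪ {χ}))
      have hbot : Deriv (Γ ∪ {χ}) Form.bot := not_not.mp hincons
      have hneg : Deriv Γ (χ.imp .bot) := deriv_union hbot
      have hrest : Deriv Γ (bigOr L) := deriv_mp hd hneg
      obtain ⟨ψ, hmem, hψ⟩ := ih (fun x hx => hincl x (List.mem_cons_of_mem _ hx)) hrest
      exact ⟨ψ, List.mem_cons_of_mem _ hmem, hψ⟩

private lemma incl_bigAnd_mem {γ : Form Agt} {l : List (Form Agt)} {ψ : Form Agt}
    (h : InCl γ (bigAnd l)) (hmem : ψ ∈ l) : InCl γ ψ := by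
  induction l with
  | nil => cases hmem
  | cons x l ih =>
    rcases List.mem_cons.mp hmem with h' | h'
    · exact h' ▸ (InCl.and1 h)
    · exact ih (InCl.and2 h) h'

private lemma incl_K_tri {γ φ : Form Agt} {G : Finset Agt} {a : Agt}
    (hcl : InCl γ (Form.tri φ)) (hG : G ∈ triples Agt) (ha : a ∈ G) :
    InCl γ (Form.K a (Form.tri φ)) :=
  incl_bigAnd_mem (InCl.egtri hcl hG)
    (List.mem_map.mpr ⟨a, (Finset.mem_toList).mpr ha, rfl⟩)

private lemma triples_nonempty {G : Finset Agt} (hG : G ∈ triples Agt) : G.Nonempty := by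
  have := (Finset.mem_powersetCard.mp hG).2
  exact Finset.card_pos.mp (by omega)

/-- Key lemma: an MCS containing `▲φ` contains `E_G ▲φ` for some triple `G`, and `φ`. -/
private lemma mcs_tri_forces {γ φ : Form Agt} {Γ : Set (Form Agt)} (hΓ : MCS γ Γ)
    (hcl : InCl γ (Form.tri φ)) (ht : Form.tri φ ∈ Γ) :
    (∃ G ∈ triples Agt, EG G (Form.tri φ) ∈ Γ) ∧ φ ∈ Γ := by
  have d1 : Deriv Γ (triDisj (Form.and φ (Form.tri φ))) :=
    deriv_imp (deriv_mem ht) Prov.mix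
  constructor
  · have pmono : Prov ((triDisj (Form.and φ (Form.tri φ))).imp
        (bigOr ((triples Agt).toList.map (fun G => EG G (Form.tri φ))))) :=
      bigOr_mono (triples Agt).toList _ _ (fun G _ => EG_mono G Prov.andE2)
    have d2 : Deriv Γ (bigOr ((triples Agt).toList.map (fun G => EG G (Form.tri φ)))) :=
      deriv_imp d1 pmono
    have hinc : ∀ χ ∈ (triples Agt).toList.map (fun G => EG G (Form.tri φ)), InCl γ χ := by
      intro χ hχ
      obtain ⟨G, hG, rfl⟩ := List.mem_map.mp hχ
      exact InCl.egtri hcl (Finset.mem_toList.mp hG)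
    obtain ⟨χ, hmem, hχ⟩ := mcs_disj hΓ _ hinc d2
    obtain ⟨G, hG, rfl⟩ := List.mem_map.mp hmem
    exact ⟨G, Finset.mem_toList.mp hG, hχ⟩
  · have pelim : Prov ((triDisj (Form.and φ (Form.tri φ))).imp φ) := by
      apply bigOr_elim
      intro x hx
      obtain ⟨G, hG, rfl⟩ := List.mem_map.mp hx
      obtain ⟨a, ha⟩ := triples_nonempty (Finset.mem_toList.mp hG)
      exact syl (EG_proj ha) (syl Prov.truth Prov.andE1)
    exact mcs_closed hΓ (InCl.trisub hcl) (deriv_imp d1 pelim)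

/-- Step lemma along the canonical relation. -/
private lemma step_tri {γ φ : Form Agt} (hcl : InCl γ (Form.tri φ))
    {f : {Γ : Set (Form Agt) // MCS γ Γ} → Finset Agt}
    (hf : ∀ Δ : {Γ : Set (Form Agt) // MCS γ Γ},
      (f Δ ≠ ∅ → f Δ ∈ triples Agt ∧ EG (f Δ) (Form.tri φ) ∈ Δ.1) ∧
      (f Δ = ∅ → ¬ ∃ G ∈ triples Agt, EG G (Form.tri φ) ∈ Δ.1))
    {Δ Δ' : {Γ : Set (Form Agt) // MCS γ Γ}} {a : Agt} (ha : a ∈ f Δ)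
    (hrel : (canM γ).rel a Δ Δ') : Form.tri φ ∈ Δ'.1 := by
  have hne : f Δ ≠ ∅ := fun h0 => by
    rw [h0] at ha; exact absurd ha (Finset.notMem_empty a)
  obtain ⟨hGt, hEG⟩ := (hf Δ).1 hne
  have hK : Form.K a (Form.tri φ) ∈ Δ.1 :=
    mcs_closed Δ.2 (incl_K_tri hcl hGt ha) (deriv_imp (deriv_mem hEG) (EG_proj ha))
  have hK' : Form.K a (Form.tri φ) ∈ Δ'.1 := (hrel (Form.tri φ)).mp hK
  exact mcs_closed Δ'.2 hcl (deriv_imp (deriv_mem hK') Prov.truth)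

end Aux

/-- canonical model safety lemma, left-to-right: if `▲φ ∈ cl(γ)` and
`▲φ ∈ Γ`, then any `f` choosing for each `Δ` a triple `G` with `E_G ▲φ ∈ Δ` (and `∅` if
there is none) is a group assignment function with `f(Γ) ≠ ∅`, and every `f`-consistent
path from `Γ` consists of sets containing `φ`. -/
theorem stmt16 {Agt : Type} [Fintype Agt] [DecidableEq Agt] (γ φ : Form Agt)
    (hcl : InCl γ (Form.tri φ)) (Γ : {Γ : Set (Form Agt) // MCS γ Γ})
    (hΓ : Form.tri φ ∈ Γ.1)
    (f : {Γ : Set (Form Agt) // MCS γ Γ} → Finset Agt)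
    (hf : ∀ Δ : {Γ : Set (Form Agt) // MCS γ Γ},
      (f Δ ≠ ∅ → f Δ ∈ triples Agt ∧ EG (f Δ) (Form.tri φ) ∈ Δ.1) ∧
      (f Δ = ∅ → ¬ ∃ G ∈ triples Agt, EG G (Form.tri φ) ∈ Δ.1)) :
    GroupAssign (canM γ) f ∧ f Γ ≠ ∅ ∧
      ∀ (m : ℕ) (σ : Fin (m + 1) → {Γ : Set (Form Agt) // MCS γ Γ}),
        σ 0 = Γ → FPath (canM γ) f m σ → ∀ k : Fin (m + 1), φ ∈ (σ k).1 := by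
  refine ⟨⟨?_, ?_⟩, ?_, ?_⟩
  · intro t
    by_cases h : f t = ∅
    · exact Or.inl h
    · exact Or.inr (Finset.mem_powersetCard.mp ((hf t).1 h).1).2
  · intro t t' i hi hrel h0
    have htri : Form.tri φ ∈ t'.1 := step_tri hcl hf hi hrel
    exact (hf t').2 h0 ((mcs_tri_forces t'.2 hcl htri).1)
  · intro h0
    exact (hf Γ).2 h0 ((mcs_tri_forces Γ.2 hcl hΓ).1)
  · intro m σ h0 hpath
    have htri : ∀ k : Fin (m + 1), Form.tri φ ∈ (σ k).1 := by
      intro k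
      induction k using Fin.induction with
      | zero => rw [h0]; exact hΓ
      | succ k ih =>
        obtain ⟨a, ha, hrel⟩ := hpath k
        exact step_tri hcl hf ha hrel
    intro k
    exact (mcs_tri_forces (σ k).2 hcl (htri k)).2
end

section
/- (Non-compactness of the logic of safety.) The set of formulas {▲_n φ : n ≥ 0} ∪ {¬▲φ} is unsatisfiable over epistemic models, but every finite subset of it is satisfiable (for suitable φ, e.g., an atom p, and |N| ≥ 4). Consequently the logic of epistemic logic with the ▲ operator is not compact. -/
section Aux
variable {Agt St : Type} (M : Model Agt St) (P : St → Prop)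

lemma triN_succ_imp : ∀ n t, triN M P (n+1) t → triN M P n t := by
  intro n
  induction n with
  | zero => intro t h; exact h.1
  | succ n ih =>
    intro t h
    obtain ⟨hp, G, hG, hrel⟩ := h
    exact ⟨hp, G, hG, fun a ha u hu => ih u (hrel a ha u hu)⟩

lemma triN_mono {m n : ℕ} (h : m ≤ n) : ∀ t, triN M P n t → triN M P m t := by
  induction h with
  | refl => exact fun t ht => ht
  | step _ ih => exact fun t ht => ih t (triN_succ_imp M P _ t ht)

lemma triSem_triN (hRefl : ∀ a s, M.rel a s s) :
    ∀ n s, triSem M P s → triN M P n s := by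
  intro n
  induction n with
  | zero =>
    rintro s ⟨X, hXs, hpost⟩
    obtain ⟨G, hG, h⟩ := hpost s hXs
    obtain ⟨a, ha⟩ := Finset.card_pos.mp (by omega : 0 < G.card)
    exact (h a ha s (hRefl a s)).1
  | succ n ih =>
    rintro s ⟨X, hXs, hpost⟩
    obtain ⟨G, hG, h⟩ := hpost s hXs
    obtain ⟨a, ha⟩ := Finset.card_pos.mp (by omega : 0 < G.card)
    exact ⟨(h a ha s (hRefl a s)).1, G, hG,
      fun b hb t ht => ih t ⟨X, (h b hb t ht).2, hpost⟩⟩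

end Aux

/-- The chain model on ℕ: agents 0,1 link even k with k+1; agents 2,3 link odd k with k+1. -/
def chainM (m : ℕ) : Model (Fin 4) ℕ where
  rel a s t := s = t ∨ (t = s + 1 ∧ s % 2 = a.val / 2) ∨ (s = t + 1 ∧ t % 2 = a.val / 2)
  val _ s := s < m

lemma chain_equiv (m : ℕ) : isEquivModel (chainM m) := by
  intro a
  constructor
  · intro s; exact Or.inl rfl
  · intro s t h
    rcases h with h | h | h
    · exact Or.inl h.symm
    · exact Or.inr (Or.inr h)
    · exact Or.inr (Or.inl h)
  · intro s t u h1 h2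
    simp only [chainM] at *
    omega

lemma chain_atom (m s : ℕ) : Sat (chainM m) s (.atom 0) ↔ s < m := Iff.rfl

lemma chain_pair : ∀ (G : Finset (Fin 4)), G.card = 3 → ∀ r : Fin 2,
    ∃ a ∈ G, a.val / 2 = r.val := by decide

lemma chain_triN (m : ℕ) : ∀ n s,
    triN (chainM m) (fun t => Sat (chainM m) t (.atom 0)) n s ↔ s + n < m := by
  intro n
  induction n with
  | zero =>
    intro s
    show s < m ↔ s + 0 < m
    omega
  | succ n ih =>
    intro s
    constructor
    · rintro ⟨hp, G, hG, h⟩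
      obtain ⟨a, ha, hav⟩ := chain_pair G hG ⟨s % 2, by omega⟩
      have hrel : (chainM m).rel a s (s + 1) := Or.inr (Or.inl ⟨rfl, hav.symm⟩)
      have := (ih (s + 1)).mp (h a ha (s + 1) hrel)
      omega
    · intro hlt
      refine ⟨show s < m by omega, {0, 1, 2}, by decide, ?_⟩
      intro a _ t ht
      have hb : t ≤ s + 1 := by
        rcases ht with h | h | h <;> omega
      exact (ih t).mpr (by omega)

/-- non-compactness: the set `{▲_n p : n ≥ 0} ∪ {¬▲p}` is unsatisfiable
over 4-agent epistemic models, but every finite subset of it is satisfiable. Hence the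
logic of `▲` is not compact. -/

theorem stmt17 :
    (¬ ∃ (St : Type) (M : Model (Fin 4) St), isEquivModel M ∧
        ∃ s : St, (∀ n : ℕ, triN M (fun t => Sat M t (.atom 0)) n s) ∧
          ¬ Sat M s (.tri (.atom 0))) ∧
    (∀ F : Finset ℕ, ∃ (St : Type) (M : Model (Fin 4) St), isEquivModel M ∧
        ∃ s : St, (∀ n ∈ F, triN M (fun t => Sat M t (.atom 0)) n s) ∧
          ¬ Sat M s (.tri (.atom 0))) := by
  constructor
  · rintro ⟨St, M, hEq, s, hAll, hNot⟩
    apply hNot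
    show triSem M (fun t => Sat M t (.atom 0)) s
    set P := fun t => Sat M t (Form.atom 0) with hP
    refine ⟨fun t => ∀ n, triN M P n t, hAll, ?_⟩
    intro t ht
    have hstep : ∀ n : ℕ, ∃ G : Finset (Fin 4), G.card = 3 ∧
        ∀ a ∈ G, ∀ u, M.rel a t u → triN M P n u := fun n => (ht (n+1)).2
    choose g hg3 hgrel using hstep
    obtain ⟨G, hGinf⟩ := Finite.exists_infinite_fiber g
    have hlarge : ∀ m : ℕ, ∃ n, m ≤ n ∧ g n = G := by
      intro m
      by_contra hc
      push_neg at hc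
      apply Set.infinite_coe_iff.mp hGinf
      apply Set.Finite.subset (Set.finite_lt_nat m)
      intro x hx
      simp only [Set.mem_setOf_eq]
      by_contra hxm
      exact hc x (by omega) hx
    obtain ⟨n0, _, hn0⟩ := hlarge 0
    refine ⟨G, hn0 ▸ hg3 n0, ?_⟩
    intro a ha u hu
    have key : ∀ k, triN M P k u := by
      intro k
      obtain ⟨n, hkn, hn⟩ := hlarge k
      exact triN_mono M P hkn u (hgrel n a (by rw [hn]; exact ha) u hu)
    exact ⟨key 0, key⟩
  · intro F
    refine ⟨ℕ, chainM (F.sup id + 1), chain_equiv _, 0, ?_, ?_⟩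
    · intro n hn
      exact (chain_triN _ n 0).mpr (by have := Finset.le_sup (f := id) hn; simp at this; omega)
    · intro hsat
      have h := triSem_triN (chainM (F.sup id + 1))
        (fun t => Sat (chainM (F.sup id + 1)) t (.atom 0))
        (fun a s => Or.inl rfl) (F.sup id + 1) 0 hsat
      have := (chain_triN _ _ 0).mp h
      omega
end
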